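/- arXiv:1906.09590 — 2 statements merged into one kernel-verified Lean document; each statement's English description precedes it below -/
import Mathlib

section
/- Let f_1,…,f_n be probability generating functions of probability measures on ℕ with finite means m_1,…,m_n. Then 1 − f_1(f_2(⋯f_n(0)⋯)) ≤ min_{0≤k≤n} ∏_{i=1}^k m_i (with the empty product equal to 1). Equivalently, for a branching process Z in the environment (f_1,…,f_n) started from one particle, P(Z_n>0 | environment) ≤ exp(min_{0≤k≤n} S_k), where S_k=∑_{i=1}^k log m_i. -/
open Finset MeasureTheory

noncomputable section

/-- Probability generating function of a mass function on `ℕ`: `f(s) = ∑_j μ({j}) s^j`. -/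
def genFun (f : ℕ → ℝ) (s : ℝ) : ℝ := ∑' j : ℕ, f j * s ^ j

/-- Mean of a mass function on `ℕ`: `m = ∑_j j·μ({j})`. -/
def meanOf (f : ℕ → ℝ) : ℝ := ∑' j : ℕ, (j : ℝ) * f j

/-- `f` is the mass function of a probability measure on `ℕ`. -/
def IsMassFun (f : ℕ → ℝ) : Prop := (∀ j, 0 ≤ f j) ∧ HasSum f 1

/-- `iterComp F k i s = F_{i+1}(F_{i+2}(⋯ F_{i+k}(s) ⋯))`. -/
def iterComp (F : ℕ → ℝ → ℝ) : ℕ → ℕ → ℝ → ℝ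
  | 0, _, s => s
  | k + 1, i, s => F (i + 1) (iterComp F k (i + 1) s)

/-- `Fcomp F i n s = F_{i,n}(s) = F_{i+1}(F_{i+2}(⋯ F_n(s) ⋯))`. -/
def Fcomp (F : ℕ → ℝ → ℝ) (i n : ℕ) (s : ℝ) : ℝ := iterComp F (n - i) i s

section Aux

variable {f : ℕ → ℝ} {s : ℝ}

lemma genFun_nonneg (h0 : ∀ j, 0 ≤ f j) (hs0 : 0 ≤ s) : 0 ≤ genFun f s :=
  tsum_nonneg fun j => mul_nonneg (h0 j) (pow_nonneg hs0 j)

lemma genFun_summable (h0 : ∀ j, 0 ≤ f j) (h1 : HasSum f 1) (hs0 : 0 ≤ s) (hs1 : s ≤ 1) :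
    Summable fun j : ℕ => f j * s ^ j :=
  Summable.of_nonneg_of_le (fun j => mul_nonneg (h0 j) (pow_nonneg hs0 j))
    (fun j => by
      have := pow_le_one₀ hs0 hs1 (n := j)
      nlinarith [h0 j]) h1.summable

lemma genFun_le_one (h0 : ∀ j, 0 ≤ f j) (h1 : HasSum f 1) (hs0 : 0 ≤ s) (hs1 : s ≤ 1) :
    genFun f s ≤ 1 := by
  have := Summable.tsum_le_tsum (f := fun j : ℕ => f j * s ^ j) (g := f)
    (fun j => by
      show f j * s ^ j ≤ f j
      have := pow_le_one₀ hs0 hs1 (n := j)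
      nlinarith [h0 j]) (genFun_summable h0 h1 hs0 hs1) h1.summable
  simpa [genFun, h1.tsum_eq] using this

lemma meanOf_nonneg (h0 : ∀ j, 0 ≤ f j) : 0 ≤ meanOf f :=
  tsum_nonneg fun j => mul_nonneg (Nat.cast_nonneg j) (h0 j)

lemma one_sub_genFun_le (h0 : ∀ j, 0 ≤ f j) (h1 : HasSum f 1)
    (hm : Summable fun j : ℕ => (j : ℝ) * f j) (hs0 : 0 ≤ s) (hs1 : s ≤ 1) :
    1 - genFun f s ≤ meanOf f * (1 - s) := by
  have hsum := genFun_summable h0 h1 hs0 hs1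
  have heq : 1 - genFun f s = ∑' j : ℕ, (f j - f j * s ^ j) := by
    rw [Summable.tsum_sub h1.summable hsum, h1.tsum_eq, genFun]
  have hbound : ∀ j : ℕ, f j - f j * s ^ j ≤ (j : ℝ) * f j * (1 - s) := by
    intro j
    have hb := one_add_mul_le_pow (show (-2 : ℝ) ≤ s - 1 by linarith) j
    have hb' : 1 - s ^ j ≤ (j : ℝ) * (1 - s) := by
      have : (1 + (s - 1)) ^ j = s ^ j := by ring_nf
      rw [this] at hb; linarith
    nlinarith [h0 j]
  have hsum2 : Summable fun j : ℕ => (j : ℝ) * f j * (1 - s) := hm.mul_right _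
  calc 1 - genFun f s = ∑' j : ℕ, (f j - f j * s ^ j) := heq
    _ ≤ ∑' j : ℕ, (j : ℝ) * f j * (1 - s) :=
        Summable.tsum_le_tsum hbound (h1.summable.sub hsum) hsum2
    _ = meanOf f * (1 - s) := by rw [tsum_mul_right]; rfl

lemma iterComp_add (F : ℕ → ℝ → ℝ) (a b i : ℕ) (s : ℝ) :
    iterComp F (a + b) i s = iterComp F a i (iterComp F b (i + a) s) := by
  induction a generalizing i with
  | zero => simp [iterComp]
  | succ a ih =>
    have : a + 1 + b = (a + b) + 1 := by omega
    rw [this]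
    show F (i + 1) (iterComp F (a + b) (i + 1) s)
      = F (i + 1) (iterComp F a (i + 1) (iterComp F b (i + (a + 1)) s))
    rw [ih (i + 1), show i + 1 + a = i + (a + 1) by omega]

end Aux

/-- for probability generating functions `f_1,…,f_n` of probability measures on `ℕ`
with finite means `m_1,…,m_n`, the survival probability of the associated branching process in
varying environment satisfies
`1 − f_1(f_2(⋯f_n(0)⋯)) ≤ min_{0 ≤ k ≤ n} ∏_{i=1}^k m_i`, i.e. the bound holds for every
`0 ≤ k ≤ n`; equivalently `P(Z_n > 0 | env) ≤ exp (min_{0 ≤ k ≤ n} S_k)` with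
`S_k = ∑_{i=1}^k log m_i`. -/
theorem survival_le_exp_min_assoc_walk (n : ℕ) (μ : ℕ → ℕ → ℝ)
    (hmass : ∀ i, 1 ≤ i → i ≤ n → IsMassFun (μ i))
    (hmean : ∀ i, 1 ≤ i → i ≤ n → Summable fun j : ℕ => (j : ℝ) * μ i j) :
    (∀ k, k ≤ n →
      1 - Fcomp (fun i => genFun (μ i)) 0 n 0 ≤ ∏ i ∈ Finset.Icc 1 k, meanOf (μ i)) ∧
    (∀ k, k ≤ n →
      1 - Fcomp (fun i => genFun (μ i)) 0 n 0
        ≤ Real.exp (∑ i ∈ Finset.Icc 1 k, Real.log (meanOf (μ i)))) := by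
  set F : ℕ → ℝ → ℝ := fun i => genFun (μ i) with hF
  -- key induction
  have key : ∀ k i, i + k ≤ n → ∀ s : ℝ, 0 ≤ s → s ≤ 1 →
      0 ≤ iterComp F k i s ∧ iterComp F k i s ≤ 1 ∧
      1 - iterComp F k i s ≤ (∏ j ∈ Finset.Icc (i + 1) (i + k), meanOf (μ j)) * (1 - s) := by
    intro k
    induction k with
    | zero =>
      intro i _ s hs0 hs1
      refine ⟨hs0, hs1, ?_⟩
      rw [show Finset.Icc (i + 1) (i + 0) = ∅ from Finset.Icc_eq_empty (by omega)]
      simp [iterComp]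
    | succ k ih =>
      intro i hik s hs0 hs1
      obtain ⟨ht0, ht1, htb⟩ := ih (i + 1) (by omega) s hs0 hs1
      set t := iterComp F k (i + 1) s with htdef
      have hi1 : 1 ≤ i + 1 := by omega
      have hi1n : i + 1 ≤ n := by omega
      obtain ⟨h0, h1⟩ := hmass (i + 1) hi1 hi1n
      have hm := hmean (i + 1) hi1 hi1n
      have hcomp : iterComp F (k + 1) i s = F (i + 1) t := rfl
      have hFt0 : 0 ≤ F (i + 1) t := genFun_nonneg h0 ht0
      have hFt1 : F (i + 1) t ≤ 1 := genFun_le_one h0 h1 ht0 ht1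
      have hstep : 1 - F (i + 1) t ≤ meanOf (μ (i + 1)) * (1 - t) :=
        one_sub_genFun_le h0 h1 hm ht0 ht1
      refine ⟨by rw [hcomp]; exact hFt0, by rw [hcomp]; exact hFt1, ?_⟩
      rw [hcomp]
      have hprod : ∏ j ∈ Finset.Icc (i + 1) (i + (k + 1)), meanOf (μ j)
          = meanOf (μ (i + 1)) * ∏ j ∈ Finset.Icc (i + 1 + 1) (i + 1 + k), meanOf (μ j) := by
        rw [show Finset.Icc (i + 1) (i + (k + 1))
            = insert (i + 1) (Finset.Icc (i + 1 + 1) (i + 1 + k)) by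
          ext x; simp [Finset.mem_Icc]; omega]
        rw [Finset.prod_insert (by simp [Finset.mem_Icc])]
      rw [hprod]
      have hmn : 0 ≤ meanOf (μ (i + 1)) := meanOf_nonneg h0
      calc 1 - F (i + 1) t ≤ meanOf (μ (i + 1)) * (1 - t) := hstep
        _ ≤ meanOf (μ (i + 1)) *
            ((∏ j ∈ Finset.Icc (i + 1 + 1) (i + 1 + k), meanOf (μ j)) * (1 - s)) :=
          mul_le_mul_of_nonneg_left htb hmn
        _ = meanOf (μ (i + 1)) * (∏ j ∈ Finset.Icc (i + 1 + 1) (i + 1 + k), meanOf (μ j))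
            * (1 - s) := by ring
  have main : ∀ k, k ≤ n →
      1 - Fcomp F 0 n 0 ≤ ∏ i ∈ Finset.Icc 1 k, meanOf (μ i) := by
    intro k hk
    have hsplit : Fcomp F 0 n 0 = iterComp F k 0 (iterComp F (n - k) k 0) := by
      unfold Fcomp
      rw [show n - 0 = k + (n - k) by omega, iterComp_add]
      norm_num
    obtain ⟨ht0, ht1, _⟩ := key (n - k) k (by omega) 0 le_rfl zero_le_one
    set t := iterComp F (n - k) k 0 with htdef
    obtain ⟨_, _, hb⟩ := key k 0 (by omega) t ht0 ht1
    have hpn : 0 ≤ ∏ j ∈ Finset.Icc 1 k, meanOf (μ j) := by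
      apply Finset.prod_nonneg
      intro j hj
      simp only [Finset.mem_Icc] at hj
      exact meanOf_nonneg (hmass j hj.1 (le_trans hj.2 hk)).1
    rw [hsplit]
    calc 1 - iterComp F k 0 t
        ≤ (∏ j ∈ Finset.Icc (0 + 1) (0 + k), meanOf (μ j)) * (1 - t) := hb
      _ ≤ (∏ j ∈ Finset.Icc 1 k, meanOf (μ j)) * 1 := by
          simp only [Nat.zero_add]
          exact mul_le_mul_of_nonneg_left (by linarith) hpn
      _ = ∏ j ∈ Finset.Icc 1 k, meanOf (μ j) := mul_one _
  refine ⟨main, fun k hk => le_trans (main k hk) ?_⟩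
  rw [Real.exp_sum]
  apply Finset.prod_le_prod
  · intro j hj
    simp only [Finset.mem_Icc] at hj
    exact meanOf_nonneg (hmass j hj.1 (le_trans hj.2 hk)).1
  · intro j _
    exact Real.le_exp_log _
end
end

section
/- Let X_1,X_2,… be i.i.d. real random variables, S_0=0, S_k=X_1+⋯+X_k, M_k:=max(S_1,…,S_k), L_k:=min(S_0,…,S_k), and τ(n):=min{i≥0:S_i=L_n}. Then for every β∈ℝ and all 0≤k≤n, E[e^{−βS_n}·e^{S_k}; τ(n)=k] = E[e^{(1−β)S_k}; M_k<0] · E[e^{−βS_{n−k}}; L_{n−k}≥0] (an identity in [0,∞], where E[A;B] denotes E[A·1_B]). -/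
open Finset MeasureTheory ProbabilityTheory

noncomputable section

namespace RWDualityAux

variable {Ω : Type*} [MeasurableSpace Ω]

/-- Partial sum of the first `j` coordinates of a vector in `Fin m → ℝ`. -/
def W (m j : ℕ) (x : Fin m → ℝ) : ℝ :=
  ∑ i ∈ Finset.range j, if h : i < m then x ⟨i, h⟩ else 0

lemma W_apply (m j : ℕ) (x : Fin m → ℝ) :
    W m j x = ∑ i ∈ Finset.range j, if h : i < m then x ⟨i, h⟩ else 0 := rfl

lemma measurable_W (m j : ℕ) : Measurable (W m j) := by
  apply Finset.measurable_sum
  intro i _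
  by_cases h : i < m
  · simp only [dif_pos h]
    exact measurable_pi_apply _
  · simp only [dif_neg h]
    exact measurable_const

lemma measurableSet_forall2 {α : Type*} [MeasurableSpace α] (p q : ℕ → Prop)
    (f : ℕ → α → Prop) (hf : ∀ i, MeasurableSet {x | f i x}) :
    MeasurableSet {x | ∀ i, p i → q i → f i x} := by
  classical
  simp only [Set.setOf_forall]
  refine MeasurableSet.iInter fun i => ?_
  by_cases hp : p i
  · by_cases hq : q i
    · simpa [hp, hq] using hf i
    · simp [hq]
  · simp [hp]

lemma measurableSet_forall1 {α : Type*} [MeasurableSpace α] (p : ℕ → Prop)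
    (f : ℕ → α → Prop) (hf : ∀ i, MeasurableSet {x | f i x}) :
    MeasurableSet {x | ∀ i, p i → f i x} := by
  classical
  simp only [Set.setOf_forall]
  refine MeasurableSet.iInter fun i => ?_
  by_cases hp : p i
  · simpa [hp] using hf i
  · simp [hp]

/-- The law of any injectively reindexed finite subfamily of an i.i.d. family is the
product measure. -/
lemma map_eq_pi (P : Measure Ω) [IsProbabilityMeasure P]
    (X : ℕ → Ω → ℝ) (hmeas : ∀ n, Measurable (X n))
    (hindep : iIndepFun X P)
    (hident : ∀ n, IdentDistrib (X n) (X 1) P P)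
    (m : ℕ) (ι : Fin m → ℕ) (hinj : Function.Injective ι) :
    P.map (fun ω (i : Fin m) => X (ι i) ω)
      = Measure.pi (fun _ : Fin m => P.map (X 1)) := by
  classical
  haveI : IsProbabilityMeasure (P.map (X 1)) :=
    Measure.isProbabilityMeasure_map (hmeas 1).aemeasurable
  refine (Measure.pi_eq fun s hs => ?_).symm
  rw [Measure.map_apply (measurable_pi_lambda _ fun i => hmeas (ι i))
      (MeasurableSet.univ_pi hs)]
  have hpre : (fun ω (i : Fin m) => X (ι i) ω) ⁻¹' Set.pi Set.univ s
      = ⋂ i, X (ι i) ⁻¹' s i := by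
    ext ω; simp [Set.mem_pi]
  rw [hpre]
  set T : Finset ℕ := Finset.image ι Finset.univ with hT
  set f' : ℕ → Set Ω :=
    Function.extend ι (fun i => X (ι i) ⁻¹' s i) (fun _ => Set.univ) with hf'
  have hext : ∀ i : Fin m, f' (ι i) = X (ι i) ⁻¹' s i := fun i =>
    hinj.extend_apply _ _ i
  have h1 : (⋂ i, X (ι i) ⁻¹' s i) = ⋂ j ∈ T, f' j := by
    ext ω
    simp only [Set.mem_iInter, hT, Finset.mem_image, Finset.mem_univ, true_and]
    constructor
    · rintro h j ⟨i, rfl⟩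
      rw [hext]; exact h i
    · intro h i
      rw [← hext]; exact h _ ⟨i, rfl⟩
  have h2 := hindep.meas_biInter (S := T) (s := f') ?_
  · rw [h1, h2, hT, Finset.prod_image (fun a _ b _ h => hinj h)]
    refine Finset.prod_congr rfl fun i _ => ?_
    rw [hext, ← Measure.map_apply (hmeas (ι i)) (hs i), (hident (ι i)).map_eq]
  · intro j hj
    rw [hT] at hj
    obtain ⟨i, -, rfl⟩ := Finset.mem_image.mp hj
    exact ⟨s i, hs i, (hext i).symm⟩

lemma lintegral_comp_eq (P : Measure Ω) [IsProbabilityMeasure P]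
    (X : ℕ → Ω → ℝ) (hmeas : ∀ n, Measurable (X n))
    (hindep : iIndepFun X P)
    (hident : ∀ n, IdentDistrib (X n) (X 1) P P)
    (m : ℕ) (ι ι' : Fin m → ℕ)
    (hinj : Function.Injective ι) (hinj' : Function.Injective ι')
    (Φ : (Fin m → ℝ) → ENNReal) (hΦ : Measurable Φ) :
    ∫⁻ ω, Φ (fun i => X (ι i) ω) ∂P = ∫⁻ ω, Φ (fun i => X (ι' i) ω) ∂P := by
  rw [← lintegral_map hΦ (measurable_pi_lambda _ fun i => hmeas (ι i)),
      ← lintegral_map hΦ (measurable_pi_lambda _ fun i => hmeas (ι' i)),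
      map_eq_pi P X hmeas hindep hident m ι hinj,
      map_eq_pi P X hmeas hindep hident m ι' hinj']

end RWDualityAux

open RWDualityAux

/-- duality decomposition of a random walk at the first minimum.
`X_1, X_2, …` i.i.d., `S_0 = 0`, `S_k = X_1 + ⋯ + X_k`, `M_k = max(S_1,…,S_k)`
(the event `M_k < 0` is `∀ i ∈ [1,k], S_i < 0`), `L_k = min(S_0,…,S_k)` (the event
`L_k ≥ 0` is `∀ i ≤ k, S_i ≥ 0`), and `τ(n) = min{i ≥ 0 : S_i = L_n}`.  Then for every
`β ∈ ℝ` and `0 ≤ k ≤ n`,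
`E[e^{−βS_n}·e^{S_k}; τ(n) = k] = E[e^{(1−β)S_k}; M_k < 0] · E[e^{−βS_{n−k}}; L_{n−k} ≥ 0]`,
an identity in `[0,∞]`. -/
theorem rw_duality_first_minimum {Ω : Type*} [MeasurableSpace Ω]
    (P : Measure Ω) [IsProbabilityMeasure P]
    (X : ℕ → Ω → ℝ) (hmeas : ∀ n, Measurable (X n))
    (hindep : iIndepFun X P)
    (hident : ∀ n, IdentDistrib (X n) (X 1) P P)
    (S : ℕ → Ω → ℝ) (hS : ∀ n ω, S n ω = ∑ i ∈ Finset.range n, X (i + 1) ω)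
    (τ : ℕ → Ω → ℕ) (hτ : ∀ n ω, τ n ω = sInf {i | ∀ j ≤ n, S i ω ≤ S j ω})
    (β : ℝ) (k n : ℕ) (hkn : k ≤ n) :
    ∫⁻ ω in {ω | τ n ω = k},
        ENNReal.ofReal (Real.exp (-β * S n ω) * Real.exp (S k ω)) ∂P
      = (∫⁻ ω in {ω | ∀ i, 1 ≤ i → i ≤ k → S i ω < 0},
            ENNReal.ofReal (Real.exp ((1 - β) * S k ω)) ∂P)
        * ∫⁻ ω in {ω | ∀ i ≤ n - k, 0 ≤ S i ω},
            ENNReal.ofReal (Real.exp (-β * S (n - k) ω)) ∂P := by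
  classical
  -- basic facts about S
  have hSm : ∀ j, Measurable (S j) := by
    intro j
    have : S j = fun ω => ∑ i ∈ Finset.range j, X (i + 1) ω := funext fun ω => hS j ω
    rw [this]
    exact Finset.measurable_sum _ fun i _ => hmeas _
  have hS0 : ∀ ω, S 0 ω = 0 := fun ω => by simp [hS]
  have hstep : ∀ c ω, S (c + 1) ω = S c ω + X (c + 1) ω := fun c ω => by
    rw [hS, hS, Finset.sum_range_succ]
  have hS_add : ∀ a b ω, S (a + b) ω = S a ω + ∑ i ∈ Finset.range b, X (a + i + 1) ω := by
    intro a b ω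
    induction b with
    | zero => simp
    | succ b ih =>
      rw [show a + (b + 1) = (a + b) + 1 from rfl, hstep, ih, Finset.sum_range_succ]
      ring
  -- the two events
  set A : Set Ω := {ω | ∀ i, i < k → S k ω < S i ω} with hA_def
  set B : Set Ω := {ω | ∀ j, k ≤ j → j ≤ n → S k ω ≤ S j ω} with hB_def
  have hAmeas : MeasurableSet A :=
    measurableSet_forall1 (fun i => i < k) (fun i ω => S k ω < S i ω)
      (fun i => measurableSet_lt (hSm k) (hSm i))
  have hBmeas : MeasurableSet B :=
    measurableSet_forall2 (fun j => k ≤ j) (fun j => j ≤ n)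
      (fun j ω => S k ω ≤ S j ω) (fun j => measurableSet_le (hSm k) (hSm j))
  -- characterization of the first-minimum event
  have hset : {ω | τ n ω = k} = A ∩ B := by
    ext ω
    simp only [Set.mem_setOf_eq, Set.mem_inter_iff, hA_def, hB_def]
    rw [hτ]
    have hTne : {i | ∀ j ≤ n, S i ω ≤ S j ω}.Nonempty := by
      obtain ⟨i0, hi0mem, hi0⟩ := Finset.exists_min_image (Finset.range (n + 1))
        (fun j => S j ω) ⟨0, by simp⟩
      exact ⟨i0, fun j hj => hi0 j (Finset.mem_range.mpr (Nat.lt_succ_of_le hj))⟩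
    constructor
    · rintro rfl
      have hkT : sInf {i | ∀ j ≤ n, S i ω ≤ S j ω} ∈ {i | ∀ j ≤ n, S i ω ≤ S j ω} :=
        Nat.sInf_mem hTne
      refine ⟨fun i hi => ?_, fun j hkj hjn => hkT j hjn⟩
      have hiT : i ∉ {i | ∀ j ≤ n, S i ω ≤ S j ω} := Nat.notMem_of_lt_sInf hi
      simp only [Set.mem_setOf_eq, not_forall] at hiT
      obtain ⟨j, hjn, hji⟩ := hiT
      push_neg at hji
      exact lt_of_le_of_lt (hkT j hjn) hji
    · rintro ⟨hA', hB'⟩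
      have hkT : k ∈ {i | ∀ j ≤ n, S i ω ≤ S j ω} := by
        intro j hjn
        rcases lt_or_ge j k with hj | hj
        · exact (hA' j hj).le
        · exact hB' j hj hjn
      refine le_antisymm (Nat.sInf_le hkT) ?_
      by_contra h
      push_neg at h
      exact absurd (Nat.sInf_mem hTne k hkn) (not_le.mpr (hA' _ h))
  -- partial-sum computations for the reindexed tuples
  have hW1 : ∀ (m j : ℕ), j ≤ m → ∀ ω,
      W m j (fun i : Fin m => X ((i : ℕ) + 1) ω) = S j ω := by
    intro m j hj ω
    rw [W_apply, hS]
    refine Finset.sum_congr rfl fun i hi => ?_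
    rw [dif_pos (lt_of_lt_of_le (Finset.mem_range.mp hi) hj)]
  have hW2 : ∀ ω j, j ≤ n - k →
      W (n - k) j (fun i : Fin (n - k) => X (k + (i : ℕ) + 1) ω)
        = S (k + j) ω - S k ω := by
    intro ω j hj
    have h1 : W (n - k) j (fun i : Fin (n - k) => X (k + (i : ℕ) + 1) ω)
        = ∑ i ∈ Finset.range j, X (k + i + 1) ω := by
      rw [W_apply]
      refine Finset.sum_congr rfl fun i hi => ?_
      rw [dif_pos (lt_of_lt_of_le (Finset.mem_range.mp hi) hj)]
    rw [h1, hS_add k j ω]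
    ring
  have hW3 : ∀ ω m', m' ≤ k →
      W k m' (fun i : Fin k => X (k - (i : ℕ)) ω) + S (k - m') ω = S k ω := by
    intro ω m' hm'
    have h1 : W k m' (fun i : Fin k => X (k - (i : ℕ)) ω)
        = ∑ i ∈ Finset.range m', X (k - i) ω := by
      rw [W_apply]
      refine Finset.sum_congr rfl fun i hi => ?_
      rw [dif_pos (lt_of_lt_of_le (Finset.mem_range.mp hi) hm')]
    have h2 : ∑ i ∈ Finset.range m', X (k - i) ω
        = ∑ i ∈ Finset.range m', X ((k - m') + i + 1) ω := by
      rw [← Finset.sum_range_reflect (fun j => X ((k - m') + j + 1) ω) m']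
      refine Finset.sum_congr rfl fun j hj => ?_
      have hj' := Finset.mem_range.mp hj
      congr 1
      omega
    have h3 := hS_add (k - m') m' ω
    rw [show k - m' + m' = k from by omega] at h3
    rw [h1, h2]
    linarith
  -- the two building-block functions on finite-dimensional spaces
  set F' : (Fin k → ℝ) → ENNReal :=
    Set.indicator {x | ∀ m', 1 ≤ m' → m' ≤ k → W k m' x < 0}
      (fun x => ENNReal.ofReal (Real.exp ((1 - β) * W k k x))) with hF'def
  set G : (Fin (n - k) → ℝ) → ENNReal :=
    Set.indicator {z | ∀ j, j ≤ n - k → 0 ≤ W (n - k) j z}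
      (fun z => ENNReal.ofReal (Real.exp (-β * W (n - k) (n - k) z))) with hGdef
  have hF'meas : Measurable F' := by
    rw [hF'def]
    exact Measurable.indicator
      (ENNReal.measurable_ofReal.comp
        (Real.measurable_exp.comp ((measurable_W k k).const_mul _)))
      (measurableSet_forall2 (fun m' => 1 ≤ m') (fun m' => m' ≤ k)
        (fun m' x => W k m' x < 0)
        (fun m' => measurableSet_lt (measurable_W k m') measurable_const))
  have hGmeas : Measurable G := by
    rw [hGdef]
    exact Measurable.indicator
      (ENNReal.measurable_ofReal.comp
        (Real.measurable_exp.comp ((measurable_W (n - k) (n - k)).const_mul _)))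
      (measurableSet_forall1 (fun j => j ≤ n - k)
        (fun j z => 0 ≤ W (n - k) j z)
        (fun j => measurableSet_le measurable_const (measurable_W (n - k) j)))
  -- pointwise identifications
  have hFV3 : ∀ ω, F' (fun i : Fin k => X (k - (i : ℕ)) ω)
      = A.indicator (fun ω => ENNReal.ofReal (Real.exp ((1 - β) * S k ω))) ω := by
    intro ω
    have hval : W k k (fun i : Fin k => X (k - (i : ℕ)) ω) = S k ω := by
      have h := hW3 ω k le_rfl
      rw [Nat.sub_self, hS0 ω] at h
      linarith
    by_cases hωA : ω ∈ A
    · have hA'' : ∀ i, i < k → S k ω < S i ω := hωA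
      have hx : (fun i : Fin k => X (k - (i : ℕ)) ω)
          ∈ {x | ∀ m', 1 ≤ m' → m' ≤ k → W k m' x < 0} := by
        intro m' h1 h2
        have hw := hW3 ω m' h2
        have hlt := hA'' (k - m') (by omega)
        linarith
      rw [hF'def, Set.indicator_of_mem hx, Set.indicator_of_mem hωA, hval]
    · have hx : (fun i : Fin k => X (k - (i : ℕ)) ω)
          ∉ {x | ∀ m', 1 ≤ m' → m' ≤ k → W k m' x < 0} := by
        intro hx
        apply hωA
        intro i hi
        have hw := hW3 ω (k - i) (by omega)
        rw [show k - (k - i) = i from by omega] at hw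
        have hlt := hx (k - i) (by omega) (by omega)
        linarith
      rw [hF'def, Set.indicator_of_notMem hx, Set.indicator_of_notMem hωA]
  have hGV2 : ∀ ω, G (fun i : Fin (n - k) => X (k + (i : ℕ) + 1) ω)
      = B.indicator (fun ω => ENNReal.ofReal (Real.exp (-β * (S n ω - S k ω)))) ω := by
    intro ω
    have hval : W (n - k) (n - k) (fun i : Fin (n - k) => X (k + (i : ℕ) + 1) ω)
        = S n ω - S k ω := by
      have h := hW2 ω (n - k) le_rfl
      rw [show k + (n - k) = n from by omega] at h
      exact h
    by_cases hωB : ω ∈ B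
    · have hB'' : ∀ j, k ≤ j → j ≤ n → S k ω ≤ S j ω := hωB
      have hx : (fun i : Fin (n - k) => X (k + (i : ℕ) + 1) ω)
          ∈ {z | ∀ j, j ≤ n - k → 0 ≤ W (n - k) j z} := by
        intro j hj
        have hw := hW2 ω j hj
        have hle := hB'' (k + j) (by omega) (by omega)
        linarith
      rw [hGdef, Set.indicator_of_mem hx, Set.indicator_of_mem hωB, hval]
    · have hx : (fun i : Fin (n - k) => X (k + (i : ℕ) + 1) ω)
          ∉ {z | ∀ j, j ≤ n - k → 0 ≤ W (n - k) j z} := by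
        intro hx
        apply hωB
        intro j hkj hjn
        have hw := hW2 ω (j - k) (by omega)
        rw [show k + (j - k) = j from by omega] at hw
        have hle := hx (j - k) (by omega)
        linarith
      rw [hGdef, Set.indicator_of_notMem hx, Set.indicator_of_notMem hωB]
  have hF'vec : ∀ ω, F' (fun i : Fin k => X ((i : ℕ) + 1) ω)
      = Set.indicator {ω | ∀ i, 1 ≤ i → i ≤ k → S i ω < 0}
          (fun ω => ENNReal.ofReal (Real.exp ((1 - β) * S k ω))) ω := by
    intro ω
    have hval := hW1 k k le_rfl ω
    by_cases hω : ∀ i, 1 ≤ i → i ≤ k → S i ω < 0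
    · have hx : (fun i : Fin k => X ((i : ℕ) + 1) ω)
          ∈ {x | ∀ m', 1 ≤ m' → m' ≤ k → W k m' x < 0} := by
        intro m' h1 h2
        rw [hW1 k m' h2 ω]
        exact hω m' h1 h2
      rw [hF'def, Set.indicator_of_mem hx,
        Set.indicator_of_mem (show ω ∈ {ω | ∀ i, 1 ≤ i → i ≤ k → S i ω < 0} from hω), hval]
    · have hx : (fun i : Fin k => X ((i : ℕ) + 1) ω)
          ∉ {x | ∀ m', 1 ≤ m' → m' ≤ k → W k m' x < 0} := by
        intro hx
        apply hω
        intro i h1 h2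
        have := hx i h1 h2
        rwa [hW1 k i h2 ω] at this
      rw [hF'def, Set.indicator_of_notMem hx,
        Set.indicator_of_notMem (show ω ∉ {ω | ∀ i, 1 ≤ i → i ≤ k → S i ω < 0} from hω)]
  have hGvec : ∀ ω, G (fun i : Fin (n - k) => X ((i : ℕ) + 1) ω)
      = Set.indicator {ω | ∀ i ≤ n - k, 0 ≤ S i ω}
          (fun ω => ENNReal.ofReal (Real.exp (-β * S (n - k) ω))) ω := by
    intro ω
    have hval := hW1 (n - k) (n - k) le_rfl ω
    by_cases hω : ∀ i ≤ n - k, 0 ≤ S i ω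
    · have hx : (fun i : Fin (n - k) => X ((i : ℕ) + 1) ω)
          ∈ {z | ∀ j, j ≤ n - k → 0 ≤ W (n - k) j z} := by
        intro j hj
        rw [hW1 (n - k) j hj ω]
        exact hω j hj
      rw [hGdef, Set.indicator_of_mem hx,
        Set.indicator_of_mem (show ω ∈ {ω | ∀ i ≤ n - k, 0 ≤ S i ω} from hω), hval]
    · have hx : (fun i : Fin (n - k) => X ((i : ℕ) + 1) ω)
          ∉ {z | ∀ j, j ≤ n - k → 0 ≤ W (n - k) j z} := by
        intro hx
        apply hω
        intro j hj
        have := hx j hj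
        rwa [hW1 (n - k) j hj ω] at this
      rw [hGdef, Set.indicator_of_notMem hx,
        Set.indicator_of_notMem (show ω ∉ {ω | ∀ i ≤ n - k, 0 ≤ S i ω} from hω)]
  -- injectivity of the reindexings
  have hinj3 : Function.Injective (fun i : Fin k => k - (i : ℕ)) := by
    intro a b h
    have ha := a.isLt
    have hb := b.isLt
    exact Fin.ext (by simp only at h; omega)
  have hinj1 : ∀ m : ℕ, Function.Injective (fun i : Fin m => (i : ℕ) + 1) := by
    intro m a b h
    exact Fin.ext (by simp only at h; omega)
  have hinj2 : Function.Injective (fun i : Fin (n - k) => k + (i : ℕ) + 1) := by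
    intro a b h
    exact Fin.ext (by simp only at h; omega)
  -- independence of the two tuples
  have hdisj : Disjoint (Finset.Icc 1 k) (Finset.Icc (k + 1) n) := by
    rw [Finset.disjoint_left]
    intro a ha hb
    rw [Finset.mem_Icc] at ha hb
    omega
  have hbase := hindep.indepFun_finset (Finset.Icc 1 k) (Finset.Icc (k + 1) n) hdisj hmeas
  have hφ3 : Measurable (fun (u : (Finset.Icc 1 k : Finset ℕ) → ℝ) (i : Fin k) =>
      u ⟨k - (i : ℕ), by have := i.isLt; rw [Finset.mem_Icc]; omega⟩) :=
    measurable_pi_lambda _ fun i => measurable_pi_apply _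
  have hφ2 : Measurable (fun (u : (Finset.Icc (k + 1) n : Finset ℕ) → ℝ) (i : Fin (n - k)) =>
      u ⟨k + (i : ℕ) + 1, by have := i.isLt; rw [Finset.mem_Icc]; omega⟩) :=
    measurable_pi_lambda _ fun i => measurable_pi_apply _
  have hVindep : IndepFun (fun ω (i : Fin k) => X (k - (i : ℕ)) ω)
      (fun ω (i : Fin (n - k)) => X (k + (i : ℕ) + 1) ω) P :=
    hbase.comp hφ3 hφ2
  have hFGindep : IndepFun (fun ω => F' (fun i : Fin k => X (k - (i : ℕ)) ω))
      (fun ω => G (fun i : Fin (n - k) => X (k + (i : ℕ) + 1) ω)) P :=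
    hVindep.comp hF'meas hGmeas
  have hmF : Measurable (fun ω => F' (fun i : Fin k => X (k - (i : ℕ)) ω)) :=
    hF'meas.comp (measurable_pi_lambda _ fun i => hmeas _)
  have hmG : Measurable (fun ω => G (fun i : Fin (n - k) => X (k + (i : ℕ) + 1) ω)) :=
    hGmeas.comp (measurable_pi_lambda _ fun i => hmeas _)
  -- the pointwise factorization of the integrand
  have hpt : ∀ ω, (A ∩ B).indicator
      (fun ω => ENNReal.ofReal (Real.exp (-β * S n ω) * Real.exp (S k ω))) ω
      = F' (fun i : Fin k => X (k - (i : ℕ)) ω)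
        * G (fun i : Fin (n - k) => X (k + (i : ℕ) + 1) ω) := by
    intro ω
    rw [hFV3 ω, hGV2 ω]
    by_cases hA' : ω ∈ A
    · by_cases hB' : ω ∈ B
      · rw [Set.indicator_of_mem (Set.mem_inter hA' hB'), Set.indicator_of_mem hA',
          Set.indicator_of_mem hB', ← ENNReal.ofReal_mul (Real.exp_nonneg _),
          ← Real.exp_add, ← Real.exp_add]
        congr 1
        rw [Real.exp_eq_exp]
        ring
      · rw [Set.indicator_of_notMem (fun h => hB' h.2), Set.indicator_of_notMem hB',
          mul_zero]
    · rw [Set.indicator_of_notMem (fun h => hA' h.1), Set.indicator_of_notMem hA',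
        zero_mul]
  -- the two factors
  have hfac1 : ∫⁻ ω, F' (fun i : Fin k => X (k - (i : ℕ)) ω) ∂P
      = ∫⁻ ω in {ω | ∀ i, 1 ≤ i → i ≤ k → S i ω < 0},
          ENNReal.ofReal (Real.exp ((1 - β) * S k ω)) ∂P := by
    have h1 : ∫⁻ ω, F' (fun i : Fin k => X (k - (i : ℕ)) ω) ∂P
        = ∫⁻ ω, F' (fun i : Fin k => X ((i : ℕ) + 1) ω) ∂P :=
      lintegral_comp_eq P X hmeas hindep hident k _ _ hinj3 (hinj1 k) F' hF'meas
    rw [h1, lintegral_congr hF'vec,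
      lintegral_indicator (measurableSet_forall2 (fun i => 1 ≤ i) (fun i => i ≤ k)
        (fun i ω => S i ω < 0) (fun i => measurableSet_lt (hSm i) measurable_const))]
  have hfac2 : ∫⁻ ω, G (fun i : Fin (n - k) => X (k + (i : ℕ) + 1) ω) ∂P
      = ∫⁻ ω in {ω | ∀ i ≤ n - k, 0 ≤ S i ω},
          ENNReal.ofReal (Real.exp (-β * S (n - k) ω)) ∂P := by
    have h1 : ∫⁻ ω, G (fun i : Fin (n - k) => X (k + (i : ℕ) + 1) ω) ∂P
        = ∫⁻ ω, G (fun i : Fin (n - k) => X ((i : ℕ) + 1) ω) ∂P :=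
      lintegral_comp_eq P X hmeas hindep hident (n - k) _ _ hinj2 (hinj1 (n - k)) G hGmeas
    rw [h1, lintegral_congr hGvec,
      lintegral_indicator (measurableSet_forall1 (fun i => i ≤ n - k)
        (fun i ω => 0 ≤ S i ω) (fun i => measurableSet_le measurable_const (hSm i)))]
  -- put everything together
  have hmul := lintegral_mul_eq_lintegral_mul_lintegral_of_indepFun hmF hmG hFGindep
  simp only [Pi.mul_apply] at hmul
  rw [hset, ← lintegral_indicator (hAmeas.inter hBmeas), lintegral_congr hpt, hmul,
    hfac1, hfac2]
end
end
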